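/- Let G be a compact topological group acting continuously on a paracompact Hausdorff space X, and let s, h : X → ℝ be G-invariant functions with s upper semicontinuous, h lower semicontinuous, and s(x) < h(x) for all x ∈ X. Then there exists a continuous G-invariant function f : X → ℝ with s(x) < f(x) < h(x) for all x ∈ X. -/

import Mathlib

open Set

/-- Katětov–Tong insertion on a paracompact Hausdorff space, via partitions of unity. -/
theorem insertion_aux {X : Type*} [TopologicalSpace X] [T2Space X] [ParacompactSpace X]
    (s h : X → ℝ) (hs : UpperSemicontinuous s) (hh : LowerSemicontinuous h)
    (hsh : ∀ x, s x < h x) :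
    ∃ f : X → ℝ, Continuous f ∧ ∀ x, s x < f x ∧ f x < h x := by
  set U : ℚ → Set X := fun q => {x | s x < (q : ℝ)} ∩ {x | (q : ℝ) < h x} with hU
  have hUopen : ∀ q, IsOpen (U q) := fun q =>
    (hs.isOpen_preimage _).inter (hh.isOpen_preimage _)
  have hUcov : (univ : Set X) ⊆ ⋃ q, U q := by
    intro x _
    obtain ⟨q, hq1, hq2⟩ := exists_rat_btwn (hsh x)
    exact mem_iUnion.2 ⟨q, hq1, hq2⟩
  obtain ⟨ρ, hρ⟩ := PartitionOfUnity.exists_isSubordinate (ι := ℚ) (X := X)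
    isClosed_univ U hUopen hUcov
  refine ⟨fun x => ∑ᶠ q, ρ q x • (q : ℝ), ?_, ?_⟩
  · exact ρ.continuous_finsum_smul fun q x _ => continuousAt_const
  · intro x
    have hmem : ∀ q ∈ ρ.finsupport x, s x < (q : ℝ) ∧ (q : ℝ) < h x := by
      intro q hq
      have : x ∈ U q := hρ q (subset_tsupport _ ((ρ.mem_finsupport x).1 hq))
      exact ⟨this.1, this.2⟩
    have hpos : ∀ q ∈ ρ.finsupport x, 0 < ρ q x := fun q hq =>
      lt_of_le_of_ne (ρ.nonneg q x) (Ne.symm ((ρ.mem_finsupport x).1 hq))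
    have hne : (ρ.finsupport x).Nonempty := by
      obtain ⟨i, hi⟩ := ρ.exists_pos (mem_univ x)
      exact ⟨i, (ρ.mem_finsupport x).2 hi.ne'⟩
    have hsum1 : ∑ q ∈ ρ.finsupport x, ρ q x = 1 := ρ.sum_finsupport (mem_univ x)
    have key : ∑ᶠ q, ρ q x • (q : ℝ) = ∑ q ∈ ρ.finsupport x, ρ q x * (q : ℝ) := by
      rw [← ρ.sum_finsupport_smul_eq_finsum (fun q _ => (q : ℝ))]
      simp [smul_eq_mul]
    simp only [key]
    constructor
    · calc s x = ∑ q ∈ ρ.finsupport x, ρ q x * s x := by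
            rw [← Finset.sum_mul, hsum1, one_mul]
        _ < ∑ q ∈ ρ.finsupport x, ρ q x * (q : ℝ) :=
            Finset.sum_lt_sum_of_nonempty hne fun q hq =>
              (mul_lt_mul_iff_right₀ (hpos q hq)).2 (hmem q hq).1
    · calc ∑ q ∈ ρ.finsupport x, ρ q x * (q : ℝ)
          < ∑ q ∈ ρ.finsupport x, ρ q x * h x :=
            Finset.sum_lt_sum_of_nonempty hne fun q hq =>
              (mul_lt_mul_iff_right₀ (hpos q hq)).2 (hmem q hq).2
        _ = h x := by rw [← Finset.sum_mul, hsum1, one_mul]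

theorem stmt1 {G X : Type*} [Group G] [TopologicalSpace G] [CompactSpace G]
    [IsTopologicalGroup G] [TopologicalSpace X] [T2Space X] [ParacompactSpace X]
    [MulAction G X] [ContinuousSMul G X]
    (s h : X → ℝ)
    (hs_inv : ∀ (g : G) (x : X), s (g • x) = s x)
    (hh_inv : ∀ (g : G) (x : X), h (g • x) = h x)
    (hs : UpperSemicontinuous s) (hh : LowerSemicontinuous h)
    (hsh : ∀ x, s x < h x) :
    ∃ f : X → ℝ, Continuous f ∧ (∀ (g : G) (x : X), f (g • x) = f x) ∧
      ∀ x, s x < f x ∧ f x < h x := by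
  obtain ⟨f₀, hf₀c, hf₀⟩ := insertion_aux s h hs hh hsh
  set F : X → ℝ := fun x => sSup ((fun g : G => f₀ (g • x)) '' univ) with hF
  have himg : ∀ x : X, (fun g : G => f₀ (g • x)) '' univ = {y | ∃ g : G, f₀ (g • x) = y} := by
    intro x; ext y; simp [eq_comm]
  have hcompact : ∀ x : X, IsCompact ((fun g : G => f₀ (g • x)) '' univ) := fun x =>
    isCompact_univ.image (hf₀c.comp (continuous_id.smul continuous_const))
  have hnonempty : ∀ x : X, ((fun g : G => f₀ (g • x)) '' univ).Nonempty := fun x =>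
    ⟨f₀ ((1 : G) • x), mem_image_of_mem _ (mem_univ 1)⟩
  refine ⟨F, ?_, ?_, ?_⟩
  · exact isCompact_univ.continuous_sSup
      (f := fun (x : X) (g : G) => f₀ (g • x))
      (by exact hf₀c.comp (continuous_snd.smul continuous_fst))
  · intro g₀ x
    have : (fun g : G => f₀ (g • g₀ • x)) '' univ = (fun g : G => f₀ (g • x)) '' univ := by
      rw [himg, himg]
      ext y
      constructor
      · rintro ⟨g, hg⟩; exact ⟨g * g₀, by rwa [mul_smul]⟩
      · rintro ⟨g, hg⟩; exact ⟨g * g₀⁻¹, by rwa [mul_smul, inv_smul_smul]⟩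
    simp only [hF, this]
  · intro x
    constructor
    · have hle : f₀ ((1 : G) • x) ≤ F x :=
        le_csSup (hcompact x).bddAbove (mem_image_of_mem _ (mem_univ 1))
      rw [one_smul] at hle
      exact lt_of_lt_of_le (hf₀ x).1 hle
    · obtain ⟨g, -, hg⟩ := (hcompact x).sSup_mem (hnonempty x)
      have : F x = f₀ (g • x) := hg.symm
      rw [this, ← hh_inv g x]
      exact (hf₀ (g • x)).2
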